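/- Let ε = ε(n) satisfy ε → 0 and ε³n²/log n → ∞ as n → ∞. Let X be a binomial random variable with parameters ⌊2(n−1)(1+ε/2)/(1+ε)⌋·⌊α ε⁻²/2⌋ and (1+ε)/(2(n−1)). Then for all α and n sufficiently large, P( X < α ε⁻²/2 + α ε⁻¹/16 ) ≤ exp(−α/2⁸). -/

import Mathlib

open MeasureTheory Filter
open scoped Classical

noncomputable section

/-- The binomial distribution `Bi(N, p)` as a `PMF` on `ℕ`
(with `p` truncated into `[0,1]`). -/
def binomPMF (N : ℕ) (p : ℝ) : PMF ℕ :=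
  (PMF.binomial (min (Real.toNNReal p) 1) (min_le_right _ _) N).map Fin.val

/-- `μ` is the law of an i.i.d. sequence of `Bi(N, p)` random variables, characterized by
its values on cylinder sets.  (This is the law of the successive family sizes in the
exploration of a Galton–Watson branching process with offspring distribution `Bi(N,p)`.) -/
def IsIIDBinomialSeq (N : ℕ) (p : ℝ) (μ : Measure (ℕ → ℕ)) : Prop :=
  IsProbabilityMeasure μ ∧
    ∀ (s : Finset ℕ) (g : ℕ → ℕ),
      μ {z | ∀ i ∈ s, z i = g i} = ∏ i ∈ s, binomPMF N p (g i)

/-- Total progeny of a Galton–Watson process started from `k` individuals, read off from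
the sequence `z` of successive family sizes in its exploration: the walk `Q_t = k + Σ_{s<t} z s`
gives the total number of individuals found by time `t`, `G_t = Q_t - t` the number of
unexplored ones, and the total progeny is `Q_{T₀} = T₀` where `T₀ = inf{t : G_t = 0}`
(`∞` if the process survives forever). -/
def gwProgeny (k : ℕ) (z : ℕ → ℕ) : ℕ∞ :=
  if h : ∃ t, k + ∑ s ∈ Finset.range t, z s = t then ((Nat.find h : ℕ) : ℕ∞) else ⊤

end

lemma fin_last_sub_val {N : ℕ} (i : Fin (N+1)) : ((Fin.last N - i : Fin (N+1)) : ℕ) = N - i := by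
  rw [Fin.coe_sub_iff_le.2 i.le_last, Fin.val_last]

/-- Exponential Markov bound for the lower tail of a binomial distribution. -/
lemma binom_markov (N : ℕ) (p s m : ℝ) (hp0 : 0 ≤ p) (hp1 : p ≤ 1) (hs : 0 ≤ s) :
    (binomPMF N p).toMeasure {k : ℕ | (k:ℝ) < m}
      ≤ ENNReal.ofReal (Real.exp (s*m) * (1 - p + p * Real.exp (-s))^N) := by
  have hmin : min (Real.toNNReal p) 1 = Real.toNNReal p :=
    min_eq_left (Real.toNNReal_le_one.mpr hp1)
  have hsub : (1 : ENNReal) - ((Real.toNNReal p : NNReal) : ENNReal) = ENNReal.ofReal (1 - p) := by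
    show (1 : ENNReal) - ENNReal.ofReal p = _
    rw [← ENNReal.ofReal_one, ← ENNReal.ofReal_sub _ hp0]
  have hmeas : MeasurableSet {k : ℕ | (k:ℝ) < m} := MeasurableSet.of_discrete
  have hpm : PMF.binomial (min (Real.toNNReal p) 1) (min_le_right _ _) N
      = PMF.binomial (Real.toNNReal p) (Real.toNNReal_le_one.mpr hp1) N := by
    congr 1
  rw [binomPMF, hpm, PMF.toMeasure_map_apply _ _ _ (Measurable.of_discrete) hmeas,
    PMF.toMeasure_apply_fintype]
  have hterm : ∀ i : Fin (N+1),
      (Fin.val ⁻¹' {k : ℕ | (k:ℝ) < m}).indicator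
          (⇑(PMF.binomial (Real.toNNReal p) (Real.toNNReal_le_one.mpr hp1) N)) i
      = ENNReal.ofReal (if (i:ℝ) < m then p^(i:ℕ) * (1-p)^(N - i) * (N.choose i) else 0) := by
    intro i
    rw [Set.indicator]
    split_ifs with h1 h2 h2
    · have h1p : (0:ℝ) ≤ 1 - p := by linarith
      rw [PMF.binomial_apply, Fin.val_last, hsub,
        ENNReal.ofReal_mul (mul_nonneg (pow_nonneg hp0 _) (pow_nonneg h1p _)),
        ENNReal.ofReal_mul (pow_nonneg hp0 _), ENNReal.ofReal_pow hp0,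
        ENNReal.ofReal_pow h1p, ENNReal.ofReal_natCast]
      rfl
    · exact absurd h1 h2
    · exact absurd h2 h1
    · simp
  have h1p : (0:ℝ) ≤ 1 - p := by linarith
  have hnn : ∀ i ∈ (Finset.univ : Finset (Fin (N+1))),
      (0:ℝ) ≤ (if ((i:ℕ):ℝ) < m then p^(i:ℕ) * (1-p)^(N - (i:ℕ)) * (N.choose i) else 0) := by
    intro i _
    split_ifs with h
    · exact mul_nonneg (mul_nonneg (pow_nonneg hp0 _) (pow_nonneg h1p _)) (Nat.cast_nonneg _)
    · exact le_refl _
  rw [Finset.sum_congr rfl (fun i _ => hterm i), ← ENNReal.ofReal_sum_of_nonneg hnn]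
  apply ENNReal.ofReal_le_ofReal
  rw [Fin.sum_univ_eq_sum_range (fun i => if (i:ℝ) < m then p^i * (1-p)^(N - i) * (N.choose i) else 0)]
  have expand : (1 - p + p * Real.exp (-s))^N
      = ∑ i ∈ Finset.range (N+1), (p * Real.exp (-s))^i * (1-p)^(N-i) * (N.choose i) := by
    rw [← add_comm, add_pow]
  rw [expand, Finset.mul_sum]
  apply Finset.sum_le_sum
  intro i hi
  split_ifs with h
  · have h1 : (1:ℝ) ≤ Real.exp (s*m) * Real.exp (-s)^i := by
      rw [← Real.exp_nat_mul, ← Real.exp_add, ← Real.exp_zero]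
      apply Real.exp_le_exp.mpr
      nlinarith [h, hs]
    calc p^i * (1-p)^(N - i) * (N.choose i)
        ≤ (Real.exp (s*m) * Real.exp (-s)^i) * (p^i * (1-p)^(N - i) * (N.choose i)) := by
          nlinarith [pow_nonneg hp0 i, pow_nonneg (by linarith : (0:ℝ) ≤ 1-p) (N-i),
            mul_nonneg (mul_nonneg (pow_nonneg hp0 i) (pow_nonneg (by linarith : (0:ℝ) ≤ 1-p) (N-i))) (Nat.cast_nonneg (N.choose i))]
      _ = Real.exp (s*m) * ((p * Real.exp (-s))^i * (1-p)^(N-i) * (N.choose i)) := by ring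
  · exact mul_nonneg (Real.exp_nonneg _) (mul_nonneg (mul_nonneg
      (pow_nonneg (mul_nonneg hp0 (Real.exp_nonneg _)) _) (pow_nonneg h1p _)) (by positivity))

lemma quad_le_one_sub_exp_neg (s : ℝ) (hs : 0 ≤ s) : s - s^2 ≤ 1 - Real.exp (-s) := by
  have h1 : (-s) + 1 ≤ Real.exp (-s) := Real.add_one_le_exp (-s)
  have h2 : s + 1 ≤ Real.exp s := by linarith [Real.add_one_le_exp s]
  have h3 : Real.exp (-s) * Real.exp s = 1 := by rw [← Real.exp_add]; simp
  nlinarith [Real.exp_pos (-s), Real.exp_pos s]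

set_option maxHeartbeats 1000000 in
/-- Let `ε = ε(n)` satisfy `ε → 0` and `ε³n²/log n → ∞`, and let
`X ~ Bi(⌊2(n−1)(1+ε/2)/(1+ε)⌋·⌊α ε⁻²/2⌋, (1+ε)/(2(n−1)))`.  Then for all `α` and `n`
sufficiently large, `P(X < α ε⁻²/2 + α ε⁻¹/16) ≤ exp(−α/2⁸)`. -/
theorem binomial_lower_tail_bound (ε : ℕ → ℝ)
    (hε0 : Tendsto ε atTop (nhds 0))
    (hε3 : Tendsto (fun n => ε n ^ 3 * (n : ℝ) ^ 2 / Real.log n) atTop atTop) :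
    ∃ α₀ : ℝ, ∃ n₀ : ℕ, ∀ α : ℝ, α₀ ≤ α → ∀ n : ℕ, n₀ ≤ n →
      (binomPMF (⌊2 * ((n : ℝ) - 1) * (1 + ε n / 2) / (1 + ε n)⌋₊ * ⌊α * (ε n)⁻¹ ^ 2 / 2⌋₊)
          ((1 + ε n) / (2 * ((n : ℝ) - 1)))).toMeasure
          {k | (k : ℝ) < α * (ε n)⁻¹ ^ 2 / 2 + α * (ε n)⁻¹ / 16}
        ≤ ENNReal.ofReal (Real.exp (-α / 2 ^ 8)) := by
  have hev1 : ∀ᶠ n in atTop, ε n < 1/128 :=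
    hε0.eventually (gt_mem_nhds (by norm_num : (0:ℝ) < 1/128))
  have hev2 : ∀ᶠ n in atTop, (1000000:ℝ) ≤ ε n ^ 3 * (n:ℝ)^2 / Real.log n :=
    hε3.eventually_ge_atTop _
  rw [eventually_atTop] at hev1 hev2
  obtain ⟨n₁, h1⟩ := hev1
  obtain ⟨n₂, h2⟩ := hev2
  refine ⟨2, max (max n₁ n₂) 262144, fun α hα n hn => ?_⟩
  have h2' := h2 n (le_trans (le_trans (le_max_right _ _) (le_max_left _ _)) hn)
  have he1' : ε n < 1/128 := h1 n (le_trans (le_trans (le_max_left _ _) (le_max_left _ _)) hn)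
  have hrn : (262144:ℝ) ≤ (n:ℝ) := by
    exact_mod_cast le_trans (le_max_right _ _) hn
  set e := ε n with he_def
  set r := (n:ℝ) with hr_def
  have hr : (262144:ℝ) ≤ r := hrn
  have he1 : e < 1/128 := he1'
  have hlogpos : (1:ℝ) ≤ Real.log r := by
    rw [Real.le_log_iff_exp_le (by linarith)]
    have := Real.exp_one_lt_d9
    linarith
  have h6 : (1000000:ℝ) * Real.log r ≤ e^3 * r^2 := by
    rw [le_div_iff₀ (by linarith)] at h2'
    exact h2'
  have h6' : (1000000:ℝ) ≤ e^3 * r^2 := by linarith [h6, hlogpos]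
  have he : 0 < e := by
    by_contra hc
    push_neg at hc
    have h7 : e^3 ≤ 0 := Odd.pow_nonpos ⟨1, by norm_num⟩ hc
    have h8 : e^3 * r^2 ≤ 0 := mul_nonpos_of_nonpos_of_nonneg h7 (sq_nonneg r)
    linarith
  have hre : (32:ℝ) ≤ (r-1)*e := by
    by_contra hc
    push_neg at hc
    have hge0 : (0:ℝ) ≤ (r-1)*e := mul_nonneg (by linarith) he.le
    have h3 : ((r-1)*e)^3 < 32^3 := by
      apply pow_lt_pow_left₀ hc hge0
      norm_num
    have e1 : (r/2)^2 ≤ (r-1)^2 := pow_le_pow_left₀ (by linarith) (by linarith) 2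
    have e2 : (r/2)*(r/2)^2 ≤ (r-1)*(r-1)^2 := by
      apply mul_le_mul (by linarith) e1 (by positivity) (by linarith)
    have hc2 : 32 * r^2 ≤ (r-1)^3 := by
      linarith [e2, mul_nonneg (sq_nonneg r) (by linarith : (0:ℝ) ≤ r - 256)]
    have hc3 := mul_le_mul_of_nonneg_right hc2 (le_of_lt (pow_pos he 3))
    have hc4 : ((r-1)*e)^3 = (r-1)^3 * e^3 := mul_pow (r-1) e 3
    have hc5 : 32 * r^2 * e^3 = 32 * (e^3 * r^2) := by ring
    linarith [hc3, h6', h3]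
  -- abbreviations
  set p := (1 + e) / (2 * (r - 1)) with hp_def
  set A := 2 * (r - 1) * (1 + e / 2) / (1 + e) with hA_def
  set B := α * e⁻¹ ^ 2 / 2 with hB_def
  set s := e / 4 with hs_def
  have hα0 : (0:ℝ) < α := by linarith
  have hx : (128:ℝ) ≤ e⁻¹ := by
    rw [← one_div]
    exact (le_div_iff₀ he).mpr (by linarith)
  have hxpos : (0:ℝ) < e⁻¹ := by linarith
  have hex : e * e⁻¹ = 1 := mul_inv_cancel₀ he.ne'
  have hr1 : (1:ℝ) ≤ r - 1 := by linarith
  have hp0 : 0 ≤ p := div_nonneg (by linarith) (by linarith)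
  have hp1 : p ≤ 1 := by
    rw [hp_def, div_le_one (by linarith)]
    linarith
  have hs0 : 0 ≤ s := by rw [hs_def]; linarith
  have hs1 : s ≤ 1/512 := by rw [hs_def]; linarith
  have hss : 0 ≤ s - s^2 := by
    linarith [mul_nonneg hs0 (by linarith : (0:ℝ) ≤ 1 - s)]
  have hA1 : (1:ℝ) ≤ A := by
    rw [hA_def, le_div_iff₀ (by linarith)]
    linarith [mul_nonneg (by linarith : (0:ℝ) ≤ r - 1) he.le]
  have hB1 : (1:ℝ) ≤ B := by
    have hxx : (128:ℝ)^2 ≤ e⁻¹^2 := by nlinarith [hx, hxpos]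
    have hxb : 2 * (128:ℝ)^2 ≤ α * e⁻¹^2 :=
      mul_le_mul hα hxx (by positivity) hα0.le
    rw [hB_def]
    linarith
  have hr32 : 32 * e⁻¹ ≤ r - 1 := by
    have h9 := mul_le_mul_of_nonneg_right hre (le_of_lt hxpos)
    have h10 : (r-1)*e*e⁻¹ = r-1 := by rw [mul_assoc, hex, mul_one]
    linarith [h9, h10]
  -- floor bounds
  have hfa : A - 1 ≤ (⌊A⌋₊:ℝ) := (Nat.sub_one_lt_floor A).le
  have hfb : B - 1 ≤ (⌊B⌋₊:ℝ) := (Nat.sub_one_lt_floor B).le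
  have hNp : A*B*p - A*p - B*p ≤ ((⌊A⌋₊ * ⌊B⌋₊ : ℕ):ℝ) * p := by
    push_cast
    have hmul : (A-1)*(B-1) ≤ (⌊A⌋₊:ℝ)*(⌊B⌋₊:ℝ) :=
      mul_le_mul hfa hfb (by linarith) (le_trans (by linarith) hfa)
    linarith [mul_le_mul_of_nonneg_right hmul hp0]
  have hNp0 : (0:ℝ) ≤ ((⌊A⌋₊ * ⌊B⌋₊ : ℕ):ℝ) * p := mul_nonneg (Nat.cast_nonneg _) hp0
  have hApid : A * p = 1 + e/2 := by
    rw [hA_def, hp_def]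
    field_simp
  have hABp : A * B * p = (1 + e/2) * B := by
    rw [mul_right_comm, hApid]
  -- the key exponent inequality
  set m := α * e⁻¹ ^ 2 / 2 + α * e⁻¹ / 16 with hm_def
  have key : s * m - ((⌊A⌋₊ * ⌊B⌋₊ : ℕ):ℝ) * p * (1 - Real.exp (-s)) ≤ -α/256 := by
    have hw : s - s^2 ≤ 1 - Real.exp (-s) := quad_le_one_sub_exp_neg s hs0
    have step1 : s * m - ((⌊A⌋₊ * ⌊B⌋₊ : ℕ):ℝ) * p * (1 - Real.exp (-s))
        ≤ s * m - (A*B*p - A*p - B*p) * (s - s^2) := by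
      linarith [mul_le_mul_of_nonneg_left hw hNp0, mul_le_mul_of_nonneg_right hNp hss]
    have hH : s * m - (1 + e/2) * B * (s - s^2) = -α/64 + α*e/64 := by
      rw [hs_def, hm_def, hB_def]
      field_simp
      ring
    have hBp0 : 0 ≤ B * p := mul_nonneg (by linarith) hp0
    have hBpsid : B * p * s = α * e⁻¹ * (1+e) / (16 * (r-1)) := by
      rw [hB_def, hp_def, hs_def]
      field_simp
      ring
    have hBps : B * p * (s - s^2) ≤ α/256 := by
      have h1 : B * p * (s - s^2) ≤ B * p * s := by
        linarith [mul_nonneg hBp0 (sq_nonneg s)]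
      rw [hBpsid] at h1
      have h2 : α * e⁻¹ * (1+e) / (16 * (r-1)) ≤ α/256 := by
        rw [div_le_div_iff₀ (by linarith) (by norm_num)]
        have t0 : 0 ≤ α * e⁻¹ := mul_nonneg hα0.le hxpos.le
        have t1 : α * e⁻¹ * (1+e) * 256 ≤ 512 * (α * e⁻¹) := by
          linarith [mul_nonneg t0 (by linarith : (0:ℝ) ≤ 1 - e)]
        have t2 : 512 * (α * e⁻¹) ≤ 16 * (α * (r-1)) := by
          linarith [mul_le_mul_of_nonneg_left hr32 hα0.le]
        linarith [t1, t2]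
      linarith
    have hAs : (1 + e/2) * (s - s^2) ≤ α/512 := by
      linarith [mul_nonneg he.le (sq_nonneg s), sq_nonneg s,
        mul_le_of_le_one_left hs0 (by linarith : e ≤ 1), hs1, hα]
    have hαe : α * e ≤ α/128 := by linarith [mul_le_mul_of_nonneg_left he1.le hα0.le]
    calc s * m - ((⌊A⌋₊ * ⌊B⌋₊ : ℕ):ℝ) * p * (1 - Real.exp (-s))
        ≤ s * m - (A*B*p - A*p - B*p) * (s - s^2) := step1
      _ = (s * m - (1 + e/2) * B * (s - s^2)) + (1 + e/2) * (s - s^2) + B * p * (s - s^2) := by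
          rw [hABp, hApid]; ring
      _ ≤ (-α/64 + α*e/64) + α/512 + α/256 := by rw [hH]; linarith
      _ ≤ -α/256 := by linarith
  -- assemble
  refine le_trans (binom_markov _ p s m hp0 hp1 hs0) ?_
  apply ENNReal.ofReal_le_ofReal
  set Nn := ⌊A⌋₊ * ⌊B⌋₊ with hNn_def
  have hbase0 : 0 ≤ 1 - p + p * Real.exp (-s) := by
    linarith [mul_nonneg hp0 (Real.exp_nonneg (-s))]
  have hbase : 1 - p + p * Real.exp (-s) ≤ Real.exp (-(p * (1 - Real.exp (-s)))) := by
    have h := Real.one_sub_le_exp_neg (p * (1 - Real.exp (-s)))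
    linarith
  calc Real.exp (s*m) * (1 - p + p * Real.exp (-s))^Nn
      ≤ Real.exp (s*m) * Real.exp (-(p * (1 - Real.exp (-s))))^Nn := by
        apply mul_le_mul_of_nonneg_left _ (Real.exp_nonneg _)
        exact pow_le_pow_left₀ hbase0 hbase Nn
    _ = Real.exp (s*m + (Nn:ℝ) * (-(p * (1 - Real.exp (-s))))) := by
        rw [Real.exp_add, Real.exp_nat_mul]
    _ ≤ Real.exp (-α / 2^8) := by
        apply Real.exp_le_exp.mpr
        have : -α/2^8 = -α/256 := by norm_num
        rw [this]
        linarith [key]
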